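/- arXiv:1905.00573 — 4 statements merged into one kernel-verified Lean document; each statement's English description precedes it below -/
import Mathlib

section
/- Define integer sequences by Q(0)=1, Q(1)=2+x, Q(2)=3+2x, Q(3)=4+3x, Q(4)=6+6x+x², and Q(n)=Q(n−1)+(1+x)Q(n−2) for n ≥ 5 (as polynomials in x over ℤ). Then for all n ≥ 3, the constant coefficient of Q(n) equals 2·F(n), where F is the Fibonacci sequence. -/
open Polynomial

noncomputable def Q : ℕ → Polynomial ℤ
  | 0 => 1
  | 1 => 2 + X
  | 2 => 3 + 2 * X
  | 3 => 4 + 3 * X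
  | 4 => 6 + 6 * X + X ^ 2
  | (n + 5) => Q (n + 4) + (1 + X) * Q (n + 3)

lemma Q_aux (n : ℕ) : (Q (n + 3)).coeff 0 = 2 * (Nat.fib (n + 3) : ℤ) ∧
    (Q (n + 4)).coeff 0 = 2 * (Nat.fib (n + 4) : ℤ) := by
  induction n with
  | zero => refine ⟨?_, ?_⟩ <;> · simp [Q]; decide
  | succ k ih =>
    obtain ⟨h1, h2⟩ := ih
    refine ⟨h2, ?_⟩
    show (Q (k + 5)).coeff 0 = _
    rw [Q]
    have : Nat.fib (k + 1 + 4) = Nat.fib (k + 4) + Nat.fib (k + 3) := by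
      rw [show k + 1 + 4 = (k + 3) + 2 from by ring, Nat.fib_add_two]; ring
    simp [coeff_add, coeff_mul, this, h1, h2]
    ring

theorem Q_coeff_zero (n : ℕ) (hn : 3 ≤ n) :
    (Q n).coeff 0 = 2 * (Nat.fib n : ℤ) := by
  obtain ⟨m, rfl⟩ := Nat.exists_eq_add_of_le hn
  rw [Nat.add_comm]
  exact (Q_aux m).1
end

section
/- Define polynomials Q(n) ∈ ℤ[x] by Q(0)=1, Q(1)=2+x, Q(2)=3+2x, Q(3)=4+3x, Q(4)=6+6x+x², Q(n)=Q(n−1)+(1+x)Q(n−2) for n ≥ 5. Then for all n ≥ 0, Q(n) = ∑_{j=0}^{⌊(n+1)/2⌋} binom(n−j+1, j)(1+x)^j − ∑_{j=2}^{⌊(n+1)/2⌋} binom(n−j−1, j−2)(1+x)^j − ∑_{j=2}^{⌊n/2⌋} binom(n−j−2, j−2)(1+x)^j. -/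
open Polynomial Finset

noncomputable def T (M : ℕ) : Polynomial ℤ :=
  ∑ j ∈ range (M + 1), (Nat.choose (M - j) j : Polynomial ℤ) * (1 + X) ^ j

lemma T_rec (M : ℕ) : T (M + 2) = T (M + 1) + (1 + X) * T M := by
  have hA : T (M + 1) = 1 + ∑ i ∈ range (M + 1),
      (Nat.choose (M - i) (i+1) : Polynomial ℤ) * (1 + X) ^ (i+1) := by
    unfold T
    rw [Finset.sum_range_succ' (fun j => (Nat.choose (M + 1 - j) j : Polynomial ℤ) * (1 + X) ^ j) (M+1)]
    simp [Nat.succ_sub_succ, add_comm]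
  have hB : (1 + X) * T M = ∑ i ∈ range (M + 1),
      (Nat.choose (M - i) i : Polynomial ℤ) * (1 + X) ^ (i+1) := by
    unfold T
    rw [Finset.mul_sum]
    exact Finset.sum_congr rfl fun i _ => by ring
  have hC : T (M + 2) = 1 + ∑ i ∈ range (M + 2),
      ((Nat.choose (M - i) i : Polynomial ℤ) * (1 + X) ^ (i+1)
        + (Nat.choose (M - i) (i+1) : Polynomial ℤ) * (1 + X) ^ (i+1)) := by
    unfold T
    rw [Finset.sum_range_succ' (fun j => (Nat.choose (M + 2 - j) j : Polynomial ℤ) * (1 + X) ^ j) (M+2)]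
    simp only [Nat.choose_zero_right, Nat.cast_one, pow_zero, mul_one, Nat.sub_zero]
    rw [add_comm]
    congr 1
    refine Finset.sum_congr rfl fun i hi => ?_
    rcases le_or_gt i M with h | h
    · have h1 : M + 2 - (i+1) = (M - i) + 1 := by omega
      rw [h1, Nat.choose_succ_succ' (M - i) i]
      push_cast
      ring
    · have hi' : i = M + 1 := by simp only [Finset.mem_range] at hi; omega
      subst hi'
      rw [Nat.choose_eq_zero_of_lt (by omega), Nat.choose_eq_zero_of_lt (by omega),
        Nat.choose_eq_zero_of_lt (by omega)]
      simp
  rw [hC, Finset.sum_add_distrib, Finset.sum_range_succ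
    (fun i => (Nat.choose (M - i) i : Polynomial ℤ) * (1 + X) ^ (i+1)) (M+1),
    Finset.sum_range_succ
    (fun i => (Nat.choose (M - i) (i+1) : Polynomial ℤ) * (1 + X) ^ (i+1)) (M+1),
    hA, hB]
  rw [Nat.choose_eq_zero_of_lt (by omega), Nat.choose_eq_zero_of_lt (by omega)]
  push_cast
  ring

noncomputable def F (n : ℕ) : Polynomial ℤ :=
  (∑ j ∈ range ((n + 1) / 2 + 1), (Nat.choose (n - j + 1) j : Polynomial ℤ) * (1 + X) ^ j)
  - (∑ j ∈ Icc 2 ((n + 1) / 2), (Nat.choose (n - j - 1) (j - 2) : Polynomial ℤ) * (1 + X) ^ j)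
  - (∑ j ∈ Icc 2 (n / 2), (Nat.choose (n - j - 2) (j - 2) : Polynomial ℤ) * (1 + X) ^ j)

lemma F_eq (m : ℕ) : F (m + 4) =
    T (m + 5) - (1 + X) ^ 2 * T (m + 1) - (1 + X) ^ 2 * T m := by
  have h1 : ∑ j ∈ range ((m + 4 + 1) / 2 + 1),
      (Nat.choose (m + 4 - j + 1) j : Polynomial ℤ) * (1 + X) ^ j = T (m + 5) := by
    unfold T
    have hc : ∑ j ∈ range ((m + 4 + 1) / 2 + 1),
        (Nat.choose (m + 4 - j + 1) j : Polynomial ℤ) * (1 + X) ^ j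
        = ∑ j ∈ range ((m + 4 + 1) / 2 + 1),
        (Nat.choose (m + 5 - j) j : Polynomial ℤ) * (1 + X) ^ j := by
      refine Finset.sum_congr rfl fun j hj => ?_
      have hj' : j < (m + 5) / 2 + 1 := Finset.mem_range.mp hj
      have he : m + 4 - j + 1 = m + 5 - j := by omega
      rw [he]
    rw [hc]
    apply Finset.sum_subset
    · intro j hj
      simp only [Finset.mem_range] at hj ⊢
      omega
    · intro j hj hnj
      simp only [Finset.mem_range] at hj hnj
      rw [Nat.choose_eq_zero_of_lt (by omega)]
      simp
  have h2 : ∑ j ∈ Icc 2 ((m + 4 + 1) / 2),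
      (Nat.choose (m + 4 - j - 1) (j - 2) : Polynomial ℤ) * (1 + X) ^ j
      = (1 + X) ^ 2 * T (m + 1) := by
    rw [← Finset.Ico_add_one_right_eq_Icc, Finset.sum_Ico_eq_sum_range]
    unfold T
    rw [Finset.mul_sum]
    have hc : ∑ i ∈ range ((m + 4 + 1) / 2 + 1 - 2),
        (Nat.choose (m + 4 - (2 + i) - 1) (2 + i - 2) : Polynomial ℤ) * (1 + X) ^ (2 + i)
        = ∑ i ∈ range ((m + 4 + 1) / 2 + 1 - 2),
        (Nat.choose (m + 1 - i) i : Polynomial ℤ) * (1 + X) ^ 2 * (1 + X) ^ i := by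
      refine Finset.sum_congr rfl fun i hi => ?_
      have he : m + 4 - (2 + i) - 1 = m + 1 - i := by omega
      have he2 : 2 + i - 2 = i := by omega
      rw [he, he2, show 2 + i = 2 + i from rfl, pow_add]
      ring
    rw [hc]
    have hc2 : ∑ i ∈ range (m + 1 + 1),
        (1 + X) ^ 2 * ((Nat.choose (m + 1 - i) i : Polynomial ℤ) * (1 + X) ^ i)
        = ∑ i ∈ range (m + 1 + 1),
        (Nat.choose (m + 1 - i) i : Polynomial ℤ) * (1 + X) ^ 2 * (1 + X) ^ i := by
      refine Finset.sum_congr rfl fun i _ => by ring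
    rw [hc2]
    apply Finset.sum_subset
    · intro i hi
      simp only [Finset.mem_range] at hi ⊢
      omega
    · intro i hi hni
      simp only [Finset.mem_range] at hi hni
      rw [Nat.choose_eq_zero_of_lt (by omega)]
      simp
  have h3 : ∑ j ∈ Icc 2 ((m + 4) / 2),
      (Nat.choose (m + 4 - j - 2) (j - 2) : Polynomial ℤ) * (1 + X) ^ j
      = (1 + X) ^ 2 * T m := by
    rw [← Finset.Ico_add_one_right_eq_Icc, Finset.sum_Ico_eq_sum_range]
    unfold T
    rw [Finset.mul_sum]
    have hc : ∑ i ∈ range ((m + 4) / 2 + 1 - 2),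
        (Nat.choose (m + 4 - (2 + i) - 2) (2 + i - 2) : Polynomial ℤ) * (1 + X) ^ (2 + i)
        = ∑ i ∈ range ((m + 4) / 2 + 1 - 2),
        (Nat.choose (m - i) i : Polynomial ℤ) * (1 + X) ^ 2 * (1 + X) ^ i := by
      refine Finset.sum_congr rfl fun i hi => ?_
      have he : m + 4 - (2 + i) - 2 = m - i := by omega
      have he2 : 2 + i - 2 = i := by omega
      rw [he, he2, pow_add]
      ring
    rw [hc]
    have hc2 : ∑ i ∈ range (m + 1),
        (1 + X) ^ 2 * ((Nat.choose (m - i) i : Polynomial ℤ) * (1 + X) ^ i)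
        = ∑ i ∈ range (m + 1),
        (Nat.choose (m - i) i : Polynomial ℤ) * (1 + X) ^ 2 * (1 + X) ^ i := by
      refine Finset.sum_congr rfl fun i _ => by ring
    rw [hc2]
    apply Finset.sum_subset
    · intro i hi
      simp only [Finset.mem_range] at hi ⊢
      omega
    · intro i hi hni
      simp only [Finset.mem_range] at hi hni
      rw [Nat.choose_eq_zero_of_lt (by omega)]
      simp
  unfold F
  rw [h1, h2, h3]


lemma main_Q_eq_F : ∀ n, Q n = F n := by
  intro n
  induction n using Nat.strong_induction_on with
  | _ n ih =>
    match n with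
    | 0 => simp [Q, F]
    | 1 =>
      simp [Q, F, show (1+1)/2+1 = 2 from rfl, Finset.sum_range_succ]
      ring
    | 2 =>
      simp [Q, F, show (2+1)/2+1 = 2 from rfl, Finset.sum_range_succ]
      ring
    | 3 =>
      simp [Q, F, show (3+1)/2+1 = 3 from rfl, Finset.sum_range_succ, Finset.Icc_self]
      ring
    | 4 =>
      rw [show (4:ℕ) = 0 + 4 from rfl, F_eq]
      norm_num [Q, T, Finset.sum_range_succ, Nat.choose]
      ring
    | 5 =>
      rw [show (5:ℕ) = 1 + 4 from rfl, F_eq]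
      rw [show Q 5 = Q 4 + (1 + X) * Q 3 from rfl]
      norm_num [Q, T, Finset.sum_range_succ, Nat.choose]
      ring
    | (k + 6) =>
      have h5 : Q (k+5) = F (k+5) := ih (k+5) (by omega)
      have h4 : Q (k+4) = F (k+4) := ih (k+4) (by omega)
      have e1 : F (k+6) = T (k+7) - (1+X)^2 * T (k+3) - (1+X)^2 * T (k+2) := F_eq (k+2)
      have e2 : F (k+5) = T (k+6) - (1+X)^2 * T (k+2) - (1+X)^2 * T (k+1) := F_eq (k+1)
      have e3 : F (k+4) = T (k+5) - (1+X)^2 * T (k+1) - (1+X)^2 * T k := F_eq k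
      have r1 : T (k+7) = T (k+6) + (1+X) * T (k+5) := T_rec (k+5)
      have r2 : T (k+3) = T (k+2) + (1+X) * T (k+1) := T_rec (k+1)
      have r3 : T (k+2) = T (k+1) + (1+X) * T k := T_rec k
      rw [show Q (k+6) = Q (k+5) + (1 + X) * Q (k+4) from rfl, h5, h4, e1, e2, e3, r1, r2, r3]
      ring

theorem Q_formula (n : ℕ) :
    Q n =
      (∑ j ∈ range ((n + 1) / 2 + 1), (Nat.choose (n - j + 1) j : Polynomial ℤ) * (1 + X) ^ j)
      - (∑ j ∈ Icc 2 ((n + 1) / 2), (Nat.choose (n - j - 1) (j - 2) : Polynomial ℤ) * (1 + X) ^ j)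
      - (∑ j ∈ Icc 2 (n / 2), (Nat.choose (n - j - 2) (j - 2) : Polynomial ℤ) * (1 + X) ^ j) :=
  main_Q_eq_F n
end

section
/- Define polynomials H(n) ∈ ℤ[x] by H(0)=1, H(1)=x, H(2)=2x, H(3)=3x, H(4)=2x+x², H(5)=4x², and H(n)=x·H(n−2)+x·H(n−3) for n ≥ 6. Then for all n ≥ 3, H(n) = ∑_{k=0}^{⌊n/2⌋} (binom(k+1, n−2k) + binom(k, n−2k−1))·x^k. -/
open Polynomial Finset

def binom (a b : ℤ) : ℤ := if 0 ≤ b ∧ b ≤ a then Nat.choose a.toNat b.toNat else 0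

noncomputable def H : ℕ → Polynomial ℤ
  | 0 => 1
  | 1 => X
  | 2 => 2 * X
  | 3 => 3 * X
  | 4 => 2 * X + X ^ 2
  | 5 => 4 * X ^ 2
  | (n + 6) => X * H (n + 4) + X * H (n + 3)

def cI (n : ℤ) (k : ℕ) : ℤ :=
  binom ((k : ℤ) + 1) (n - 2 * k) + binom (k : ℤ) (n - 2 * k - 1)

lemma binom_eq_zero {a b : ℤ} (h : b < 0 ∨ a < b) : binom a b = 0 := by
  unfold binom; rw [if_neg]; omega

lemma binom_pascal (a b : ℤ) (ha : 0 ≤ a) :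
    binom (a + 1) b = binom a b + binom a (b - 1) := by
  unfold binom
  split_ifs with h1 h2 h3 h2 h3 h3 <;> try omega
  · -- 1 ≤ b ≤ a case and b = 0 case both may land here; handle generally
    by_cases hb : b = 0
    · subst hb; omega
    · have ha' : (a + 1).toNat = a.toNat + 1 := by omega
      have hb' : b.toNat = (b - 1).toNat + 1 := by omega
      rw [ha', hb', Nat.choose_succ_succ]
      push_cast
      ring
  · -- b = 0
    have hb : b = 0 := by omega
    subst hb
    simp
  · -- b = a + 1
    have hb : b = a + 1 := by omega
    subst hb
    have h4 : (a + 1).toNat = a.toNat + 1 := by omega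
    have h5 : (a + 1 - 1).toNat = a.toNat := by omega
    rw [h4, h5]
    simp [Nat.choose_self]

lemma cI_rec (n : ℤ) (k : ℕ) : cI n (k + 1) = cI (n - 2) k + cI (n - 3) k := by
  unfold cI
  push_cast
  have p1 := binom_pascal ((k : ℤ) + 1) (n - 2 - 2 * k) (by positivity)
  have p2 := binom_pascal (k : ℤ) (n - 2 - 2 * k - 1) (by positivity)
  ring_nf
  ring_nf at p1 p2
  linear_combination p1 + p2

lemma coeff_sum_C_X (f : ℕ → ℤ) (m i : ℕ) :
    (∑ k ∈ range (m + 1), C (f k) * X ^ k).coeff i = if i ≤ m then f i else 0 := by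
  rw [finset_sum_coeff]
  simp only [coeff_C_mul, coeff_X_pow, mul_ite, mul_one, mul_zero]
  simp [Finset.sum_ite_eq', Nat.lt_succ_iff]

lemma S_step (m : ℕ) :
    (∑ k ∈ range ((m + 6) / 2 + 1), C (cI (m + 6 : ℕ) k) * X ^ k)
      = X * (∑ k ∈ range ((m + 4) / 2 + 1), C (cI (m + 4 : ℕ) k) * X ^ k)
      + X * (∑ k ∈ range ((m + 3) / 2 + 1), C (cI (m + 3 : ℕ) k) * X ^ k) := by
  ext i
  rw [coeff_add]
  match i with
  | 0 =>
    rw [mul_coeff_zero, mul_coeff_zero, coeff_sum_C_X]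
    simp only [coeff_X_zero, zero_mul, add_zero, if_pos (Nat.zero_le _)]
    unfold cI
    push_cast
    rw [binom_eq_zero (by omega), binom_eq_zero (by omega)]
    simp
  | (j + 1) =>
    rw [coeff_X_mul, coeff_X_mul, coeff_sum_C_X, coeff_sum_C_X, coeff_sum_C_X]
    have hrec : cI ((m : ℤ) + 6) (j + 1) = cI ((m : ℤ) + 4) j + cI ((m : ℤ) + 3) j := by
      have := cI_rec ((m : ℤ) + 6) j
      rw [show (m : ℤ) + 6 - 2 = (m : ℤ) + 4 from by ring,
          show (m : ℤ) + 6 - 3 = (m : ℤ) + 3 from by ring] at this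
      exact this
    push_cast
    split_ifs with h1 h2 h3 h2 h3 h3 <;> try omega
    · have hz : cI ((m : ℤ) + 3) j = 0 := by
        unfold cI
        rw [binom_eq_zero (by omega), binom_eq_zero (by omega)]
        simp
      rw [hrec, hz, add_zero]

lemma key : ∀ n : ℕ, 3 ≤ n → H n = ∑ k ∈ range (n / 2 + 1), C (cI n k) * X ^ k := by
  intro n
  induction n using Nat.strong_induction_on with
  | _ n ih =>
    intro hn
    match n, hn with
    | 3, _ =>
      rw [show H 3 = 3 * X from rfl]
      norm_num [cI, binom, Finset.sum_range_succ]
    | 4, _ =>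
      rw [show H 4 = 2 * X + X ^ 2 from rfl]
      norm_num [cI, binom, Finset.sum_range_succ, Int.toNat]
    | 5, _ =>
      rw [show H 5 = 4 * X ^ 2 from rfl]
      norm_num [cI, binom, Finset.sum_range_succ]
    | (m + 6), _ =>
      rw [show H (m + 6) = X * H (m + 4) + X * H (m + 3) from rfl,
        ih (m + 4) (by omega) (by omega), ih (m + 3) (by omega) (by omega)]
      exact (S_step m).symm

theorem H_formula (n : ℕ) (hn : 3 ≤ n) :
    H n = ∑ k ∈ range (n / 2 + 1),
      C (binom ((k : ℤ) + 1) ((n : ℤ) - 2 * k) + binom (k : ℤ) ((n : ℤ) - 2 * k - 1)) * X ^ k := by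
  exact key n hn
end

section
/- For all n ≥ 3, ∑_{k=0}^{n} ∑_{j=0}^{k} (binom(n−2j, k−j)·binom(j, n−k−j) + binom(n−2j−1, k−j)·binom(j, n−k−j−1) − binom(n−2j−2, k−j−2)·binom(j, n−k−j)) = 2·F(n), where F is the Fibonacci sequence. -/
open Finset

lemma binom_neg_right {a b : ℤ} (h : b < 0) : binom a b = 0 := by
  simp only [binom, if_neg (by omega : ¬ (0 ≤ b ∧ b ≤ a))]

lemma binom_of_lt {a b : ℤ} (h : a < b) : binom a b = 0 := by
  simp only [binom, if_neg (by omega : ¬ (0 ≤ b ∧ b ≤ a))]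

lemma binom_natCast (a b : ℕ) : binom (a : ℤ) (b : ℤ) = (a.choose b : ℤ) := by
  rcases le_or_gt b a with h | h
  · have hc : (0:ℤ) ≤ (b:ℤ) ∧ (b:ℤ) ≤ (a:ℤ) := ⟨Int.ofNat_nonneg b, by exact_mod_cast h⟩
    rw [binom, if_pos hc, Int.toNat_natCast, Int.toNat_natCast]
  · rw [binom_of_lt (by exact_mod_cast h), Nat.choose_eq_zero_of_lt h]; simp

/-- Key Vandermonde-style lemma for the shifted inner sums. -/
lemma binom_inner_sum (a : ℤ) (j t R : ℕ) (hR : a + t < R) :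
    ∑ k ∈ range R, binom a ((k : ℤ) - t) * binom (j : ℤ) (a - ((k : ℤ) - t))
      = binom (a + j) a := by
  rcases lt_or_ge a 0 with ha | ha
  · rw [binom_neg_right ha]
    apply Finset.sum_eq_zero
    intro k _
    rcases lt_or_ge ((k : ℤ) - t) 0 with h | h
    · rw [binom_neg_right h, zero_mul]
    · rw [binom_of_lt (by omega), zero_mul]
  · obtain ⟨A, rfl⟩ := Int.eq_ofNat_of_zero_le ha
    have h1 : ∑ k ∈ range R, binom (A : ℤ) ((k : ℤ) - t) * binom (j : ℤ) ((A : ℤ) - ((k : ℤ) - t))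
        = ∑ k ∈ Finset.Ico t (A + t + 1),
            binom (A : ℤ) ((k : ℤ) - t) * binom (j : ℤ) ((A : ℤ) - ((k : ℤ) - t)) := by
      refine (Finset.sum_subset ?_ ?_).symm
      · intro k hk
        simp only [Finset.mem_Ico] at hk
        simp only [Finset.mem_range]
        omega
      · intro k _ hk
        simp only [Finset.mem_Ico, not_and_or, not_le, not_lt] at hk
        rcases hk with h | h
        · rw [binom_neg_right (by push_cast; omega), zero_mul]
        · rw [binom_of_lt (by push_cast; omega), zero_mul]
    rw [h1, Finset.sum_Ico_eq_sum_range]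
    have h2 : A + t + 1 - t = A + 1 := by omega
    rw [h2]
    have h3 : ∀ m ∈ range (A + 1),
        binom (A : ℤ) (((t + m : ℕ) : ℤ) - t) * binom (j : ℤ) ((A : ℤ) - (((t + m : ℕ) : ℤ) - t))
          = ((A.choose m : ℕ) : ℤ) * ((j.choose (A - m) : ℕ) : ℤ) := by
      intro m hm
      simp only [Finset.mem_range] at hm
      have hm' : m ≤ A := by omega
      have e1 : ((t + m : ℕ) : ℤ) - t = (m : ℤ) := by push_cast; ring
      have e2 : (A : ℤ) - (m : ℤ) = ((A - m : ℕ) : ℤ) := by push_cast [hm']; ring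
      rw [e1, e2, binom_natCast, binom_natCast]
    rw [Finset.sum_congr rfl h3]
    have e3 : (A : ℤ) + (j : ℤ) = ((A + j : ℕ) : ℤ) := by push_cast; ring
    rw [e3, binom_natCast]
    have := Nat.add_choose_eq A j A
    rw [this, Finset.Nat.sum_antidiagonal_eq_sum_range_succ_mk]
    push_cast
    rfl

/-- Summing the resulting binomials over j gives a Fibonacci number. -/
lemma sum_binom_fib (m n : ℕ) (h : m ≤ n) :
    ∑ j ∈ range (n + 1), binom ((m : ℤ) - j) ((m : ℤ) - 2 * j) = (Nat.fib (m + 1) : ℤ) := by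
  have h1 : ∑ j ∈ range (n + 1), binom ((m : ℤ) - j) ((m : ℤ) - 2 * j)
      = ∑ j ∈ range (m + 1), binom ((m : ℤ) - j) ((m : ℤ) - 2 * j) := by
    refine (Finset.sum_subset ?_ ?_).symm
    · intro k hk
      simp only [Finset.mem_range] at hk ⊢
      omega
    · intro k _ hk
      simp only [Finset.mem_range, not_lt] at hk
      exact binom_neg_right (by push_cast; omega)
  rw [h1]
  have h2 : ∀ j ∈ range (m + 1),
      binom ((m : ℤ) - j) ((m : ℤ) - 2 * j) = (((m - j).choose j : ℕ) : ℤ) := by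
    intro j hj
    simp only [Finset.mem_range] at hj
    have hj' : j ≤ m := by omega
    rcases le_or_gt (2 * j) m with h2j | h2j
    · have e1 : (m : ℤ) - j = ((m - j : ℕ) : ℤ) := by push_cast [hj']; ring
      have e2 : (m : ℤ) - 2 * j = ((m - 2 * j : ℕ) : ℤ) := by push_cast [h2j]; ring
      rw [e1, e2, binom_natCast]
      congr 1
      have : m - 2 * j = (m - j) - j := by omega
      rw [this, Nat.choose_symm (by omega)]
    · rw [binom_neg_right (by push_cast; omega)]
      rw [Nat.choose_eq_zero_of_lt (by omega)]
      simp
  rw [Finset.sum_congr rfl h2]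
  have h3 : Nat.fib (m + 1) = ∑ j ∈ range (m + 1), (m - j).choose j := by
    rw [Nat.fib_succ_eq_sum_choose, Finset.Nat.sum_antidiagonal_eq_sum_range_succ_mk]
    rw [← Finset.sum_range_reflect]
    apply Finset.sum_congr rfl
    intro j hj
    simp only [Finset.mem_range] at hj
    congr 1 <;> omega
  rw [h3]
  push_cast
  rfl

theorem double_sum_eq_two_fib (n : ℕ) (hn : 3 ≤ n) :
    ∑ k ∈ range (n + 1), ∑ j ∈ range (k + 1),
      (binom ((n : ℤ) - 2 * j) ((k : ℤ) - j) * binom (j : ℤ) ((n : ℤ) - k - j)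
       + binom ((n : ℤ) - 2 * j - 1) ((k : ℤ) - j) * binom (j : ℤ) ((n : ℤ) - k - j - 1)
       - binom ((n : ℤ) - 2 * j - 2) ((k : ℤ) - j - 2) * binom (j : ℤ) ((n : ℤ) - k - j))
      = 2 * (Nat.fib n : ℤ) := by
  -- Step 1: extend inner sum to range (n+1)
  have step1 : ∑ k ∈ range (n + 1), ∑ j ∈ range (k + 1),
      (binom ((n : ℤ) - 2 * j) ((k : ℤ) - j) * binom (j : ℤ) ((n : ℤ) - k - j)
       + binom ((n : ℤ) - 2 * j - 1) ((k : ℤ) - j) * binom (j : ℤ) ((n : ℤ) - k - j - 1)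
       - binom ((n : ℤ) - 2 * j - 2) ((k : ℤ) - j - 2) * binom (j : ℤ) ((n : ℤ) - k - j))
      = ∑ k ∈ range (n + 1), ∑ j ∈ range (n + 1),
      (binom ((n : ℤ) - 2 * j) ((k : ℤ) - j) * binom (j : ℤ) ((n : ℤ) - k - j)
       + binom ((n : ℤ) - 2 * j - 1) ((k : ℤ) - j) * binom (j : ℤ) ((n : ℤ) - k - j - 1)
       - binom ((n : ℤ) - 2 * j - 2) ((k : ℤ) - j - 2) * binom (j : ℤ) ((n : ℤ) - k - j)) := by
    apply Finset.sum_congr rfl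
    intro k hk
    simp only [Finset.mem_range] at hk
    apply Finset.sum_subset
    · intro j hj
      simp only [Finset.mem_range] at hj ⊢
      omega
    · intro j _ hj
      simp only [Finset.mem_range, not_lt] at hj
      rw [binom_neg_right (a := (n : ℤ) - 2 * j) (by push_cast; omega),
          binom_neg_right (a := (n : ℤ) - 2 * j - 1) (by push_cast; omega),
          binom_neg_right (a := (n : ℤ) - 2 * j - 2) (by push_cast; omega)]
      ring
  rw [step1, Finset.sum_comm]
  have step2 : ∀ j ∈ range (n + 1), ∑ k ∈ range (n + 1),
      (binom ((n : ℤ) - 2 * j) ((k : ℤ) - j) * binom (j : ℤ) ((n : ℤ) - k - j)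
       + binom ((n : ℤ) - 2 * j - 1) ((k : ℤ) - j) * binom (j : ℤ) ((n : ℤ) - k - j - 1)
       - binom ((n : ℤ) - 2 * j - 2) ((k : ℤ) - j - 2) * binom (j : ℤ) ((n : ℤ) - k - j))
      = binom ((n : ℤ) - j) ((n : ℤ) - 2 * j)
        + binom ((n : ℤ) - 1 - j) ((n : ℤ) - 1 - 2 * j)
        - binom ((n : ℤ) - 2 - j) ((n : ℤ) - 2 - 2 * j) := by
    intro j hj
    simp only [Finset.mem_range] at hj
    rw [Finset.sum_sub_distrib, Finset.sum_add_distrib]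
    have c1 : ∑ k ∈ range (n + 1),
        binom ((n : ℤ) - 2 * j) ((k : ℤ) - j) * binom (j : ℤ) ((n : ℤ) - k - j)
        = binom ((n : ℤ) - j) ((n : ℤ) - 2 * j) := by
      have h := binom_inner_sum ((n : ℤ) - 2 * j) j j (n + 1) (by push_cast; omega)
      rw [show (n : ℤ) - 2 * j + (j : ℤ) = (n : ℤ) - j from by ring] at h
      rw [← h]
      apply Finset.sum_congr rfl
      intro k _
      rw [show (n : ℤ) - 2 * j - ((k : ℤ) - j) = (n : ℤ) - k - j from by ring]
    have c2 : ∑ k ∈ range (n + 1),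
        binom ((n : ℤ) - 2 * j - 1) ((k : ℤ) - j) * binom (j : ℤ) ((n : ℤ) - k - j - 1)
        = binom ((n : ℤ) - 1 - j) ((n : ℤ) - 1 - 2 * j) := by
      have h := binom_inner_sum ((n : ℤ) - 2 * j - 1) j j (n + 1) (by push_cast; omega)
      rw [show (n : ℤ) - 2 * j - 1 + (j : ℤ) = (n : ℤ) - 1 - j from by ring,
          show (n : ℤ) - 2 * j - 1 = (n : ℤ) - 1 - 2 * j from by ring] at h
      rw [← h]
      apply Finset.sum_congr rfl
      intro k _
      rw [show (n : ℤ) - 1 - 2 * j - ((k : ℤ) - j) = (n : ℤ) - k - j - 1 from by ring,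
          show (n : ℤ) - 1 - 2 * j = (n : ℤ) - 2 * j - 1 from by ring]
    have c3 : ∑ k ∈ range (n + 1),
        binom ((n : ℤ) - 2 * j - 2) ((k : ℤ) - j - 2) * binom (j : ℤ) ((n : ℤ) - k - j)
        = binom ((n : ℤ) - 2 - j) ((n : ℤ) - 2 - 2 * j) := by
      have h := binom_inner_sum ((n : ℤ) - 2 * j - 2) j (j + 2) (n + 1) (by push_cast; omega)
      rw [show (n : ℤ) - 2 * j - 2 + (j : ℤ) = (n : ℤ) - 2 - j from by ring,
          show (n : ℤ) - 2 * j - 2 = (n : ℤ) - 2 - 2 * j from by ring] at h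
      rw [← h]
      apply Finset.sum_congr rfl
      intro k _
      rw [show (k : ℤ) - ((j + 2 : ℕ) : ℤ) = (k : ℤ) - j - 2 from by push_cast; ring,
          show (n : ℤ) - 2 - 2 * j - ((k : ℤ) - j - 2) = (n : ℤ) - k - j from by ring,
          show (n : ℤ) - 2 - 2 * j = (n : ℤ) - 2 * j - 2 from by ring]
    rw [c1, c2, c3]
  rw [Finset.sum_congr rfl step2, Finset.sum_sub_distrib, Finset.sum_add_distrib]
  have hA := sum_binom_fib n n le_rfl
  have hB : ∑ j ∈ range (n + 1), binom ((n : ℤ) - 1 - j) ((n : ℤ) - 1 - 2 * j)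
      = (Nat.fib (n - 1 + 1) : ℤ) := by
    rw [show (n : ℤ) - 1 = ((n - 1 : ℕ) : ℤ) from by omega]
    exact sum_binom_fib (n - 1) n (by omega)
  have hC : ∑ j ∈ range (n + 1), binom ((n : ℤ) - 2 - j) ((n : ℤ) - 2 - 2 * j)
      = (Nat.fib (n - 2 + 1) : ℤ) := by
    rw [show (n : ℤ) - 2 = ((n - 2 : ℕ) : ℤ) from by omega]
    exact sum_binom_fib (n - 2) n (by omega)
  rw [hA, hB, hC]
  rw [show n - 1 + 1 = n from by omega, show n - 2 + 1 = n - 1 from by omega]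
  have h3 : Nat.fib (n + 1) = Nat.fib (n - 1) + Nat.fib n := by
    have h4 := Nat.fib_add_two (n := n - 1)
    rw [show n - 1 + 2 = n + 1 from by omega, show n - 1 + 1 = n from by omega] at h4
    exact h4
  rw [h3]
  push_cast
  ring
end
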